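/- The chain recurrent set of the skew-product flow φᵗ equals S¹ ×_g R_c(g), where R_c(g) is the chain recurrent set of the discrete-time flow generated by g. -/

import Mathlib

open Set

/-- A continuous positive minorant via inf-convolution. -/
theorem exists_continuous_pos_le {α : Type*} [PseudoMetricSpace α] (f : α → ℝ)
    (hl : ∀ x : α, ∃ δ > (0:ℝ), ∃ b > (0:ℝ), ∀ y, dist x y < δ → b ≤ f y) :
    ∃ e : α → ℝ, Continuous e ∧ (∀ x, 0 < e x) ∧ ∀ x, e x ≤ f x := by
  have hfpos : ∀ y, 0 ≤ f y := by
    intro y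
    obtain ⟨δ, hδ, b, hb, h⟩ := hl y
    exact le_trans hb.le (h y (by simpa using hδ))
  set e : α → ℝ := fun x => ⨅ y, (min (f y) 1 + dist x y) with he
  have hbdd : ∀ x : α, BddBelow (Set.range fun y => min (f y) 1 + dist x y) := by
    intro x
    refine ⟨0, ?_⟩
    rintro _ ⟨y, rfl⟩
    exact add_nonneg (le_min (hfpos y) zero_le_one) dist_nonneg
  refine ⟨e, ?_, ?_, ?_⟩
  · have hlip : ∀ x x' : α, e x ≤ e x' + dist x x' := by
      intro x x'
      haveI : Nonempty α := ⟨x⟩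
      have key : e x' + dist x x' = (⨅ y, (min (f y) 1 + dist x' y + dist x x')) := by
        rw [he]
        exact (ciInf_add (hbdd x') _)
      rw [key]
      refine le_ciInf fun y => ?_
      calc e x ≤ min (f y) 1 + dist x y := ciInf_le (hbdd x) y
        _ ≤ min (f y) 1 + dist x' y + dist x x' := by
            have h1 := dist_triangle x x' y
            have h2 : dist x' y = dist y x' := dist_comm _ _
            have h3 : dist x x' = dist x' x := dist_comm _ _
            linarith
    refine (LipschitzWith.of_dist_le_mul (K := 1) fun x y => ?_).continuous
    rw [Real.dist_eq, NNReal.coe_one, one_mul]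
    rw [abs_sub_le_iff]
    constructor
    · linarith [hlip x y]
    · linarith [hlip y x, dist_comm x y]
  · intro x
    obtain ⟨δ, hδ, b, hb, h⟩ := hl x
    haveI : Nonempty α := ⟨x⟩
    have : min (min b 1) δ ≤ e x := by
      refine le_ciInf fun y => ?_
      by_cases hxy : dist x y < δ
      · calc min (min b 1) δ ≤ min b 1 := min_le_left _ _
          _ ≤ min (f y) 1 + dist x y :=
            le_add_of_le_of_nonneg (min_le_min (h y hxy) le_rfl) dist_nonneg
      · calc min (min b 1) δ ≤ δ := min_le_right _ _
          _ ≤ min (f y) 1 + dist x y := by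
            push_neg at hxy
            exact le_add_of_nonneg_of_le (le_min (hfpos y) zero_le_one) hxy
    exact lt_of_lt_of_le (lt_min (lt_min hb one_pos) hδ) this
  · intro x
    calc e x ≤ min (f x) 1 + dist x x := ciInf_le (hbdd x) x
      _ ≤ f x := by simp [min_le_left]

theorem g_cocycle_one {F : Type*} [NormedAddCommGroup F] [NormedSpace ℝ F]
    (X g : ℝ → F →L[ℝ] F) (hX : Continuous X) (hXper : ∀ t, X (t + 1) = X t)
    (hg0 : g 0 = 1) (hg : ∀ t, HasDerivAt g (X t ∘L g t) t) (τ : ℝ) :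
    g (τ + 1) = g τ ∘L g 1 := by
  have hgc : Continuous g := by
    rw [continuous_iff_continuousAt]; exact fun t => (hg t).continuousAt
  obtain ⟨C, hC⟩ := (isCompact_Icc (a := (0:ℝ)) (b := 1)).exists_bound_of_continuousOn
    hX.continuousOn
  have hCg : ∀ t : ℝ, ‖X t‖ ≤ C := by
    intro t
    have hper : Function.Periodic X 1 := hXper
    have h1 : X t = X (Int.fract t) := by
      have h2 := hper.sub_int_mul_eq (x := t) ⌊t⌋
      rw [mul_one] at h2
      rw [Int.fract, h2]
    rw [h1]
    exact hC _ ⟨Int.fract_nonneg t, (Int.fract_lt_one t).le⟩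
  have hC0 : 0 ≤ C := le_trans (norm_nonneg _) (hCg 0)
  set v : ℝ → (F →L[ℝ] F) → (F →L[ℝ] F) := fun t A => X t ∘L A with hv_def
  have hv : ∀ t : ℝ, LipschitzOnWith C.toNNReal (v t) univ := by
    intro t
    refine (LipschitzWith.of_dist_le_mul fun A B => ?_).lipschitzOnWith
    rw [dist_eq_norm, dist_eq_norm, hv_def]
    have h3 : X t ∘L A - X t ∘L B = X t ∘L (A - B) := (ContinuousLinearMap.comp_sub _ _ _).symm
    rw [h3, Real.coe_toNNReal _ hC0]
    calc ‖X t ∘L (A - B)‖ ≤ ‖X t‖ * ‖A - B‖ := ContinuousLinearMap.opNorm_comp_le _ _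
      _ ≤ C * ‖A - B‖ := by
          have := hCg t
          nlinarith [norm_nonneg (A - B)]
  set f₁ : ℝ → (F →L[ℝ] F) := fun τ => g (τ + 1) with hf₁
  set f₂ : ℝ → (F →L[ℝ] F) := fun τ => g τ ∘L g 1 with hf₂
  have hf₁' : ∀ u : ℝ, HasDerivAt f₁ (v u (f₁ u)) u := by
    intro u
    have := HasDerivAt.comp_add_const (f := g) (f' := X (u+1) ∘L g (u+1)) u 1 (hg (u+1))
    simpa [hv_def, hf₁, hXper u] using this
  have hf₂' : ∀ u : ℝ, HasDerivAt f₂ (v u (f₂ u)) u := by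
    intro u
    have := (hg u).clm_comp (hasDerivAt_const u (g 1))
    simpa [hv_def, hf₂, ContinuousLinearMap.comp_assoc] using this
  have h0 : f₁ 0 = f₂ 0 := by
    simp [hf₁, hf₂, hg0, ContinuousLinearMap.one_def]
  have key := ODE_solution_unique_of_mem_Icc (v := v) (s := fun _ => univ)
    (K := C.toNNReal) (f := f₁) (g := f₂) (t₀ := 0) (a := -(|τ| + 1)) (b := |τ| + 1)
    (fun t _ => hv t) ⟨by linarith [abs_nonneg τ], by linarith [abs_nonneg τ]⟩
    ((hgc.comp (continuous_add_right 1)).continuousOn)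
    (fun u _ => hf₁' u) (fun _ _ => trivial)
    ((hgc.clm_comp continuous_const).continuousOn)
    (fun u _ => hf₂' u) (fun _ _ => trivial) h0
  have hτ : τ ∈ Icc (-(|τ| + 1)) (|τ| + 1) :=
    ⟨by linarith [neg_abs_le τ], by linarith [le_abs_self τ]⟩
  exact key hτ

theorem g_cocycle_nat {F : Type*} [NormedAddCommGroup F] [NormedSpace ℝ F]
    (X g : ℝ → F →L[ℝ] F) (hX : Continuous X) (hXper : ∀ t, X (t + 1) = X t)
    (hg0 : g 0 = 1) (hg : ∀ t, HasDerivAt g (X t ∘L g t) t) (u : ℝ) (n : ℕ) :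
    g (u + n) = g u ∘L (g 1)^n := by
  induction n with
  | zero => simp [ContinuousLinearMap.one_def]
  | succ m ih =>
    have h : (u + ((m + 1 : ℕ)) : ℝ) = (u + m) + 1 := by push_cast; ring
    rw [h, g_cocycle_one X g hX hXper hg0 hg, ih, pow_succ, ContinuousLinearMap.mul_def,
      ContinuousLinearMap.comp_assoc]

theorem ginv_continuous {F : Type*} [NormedAddCommGroup F] [NormedSpace ℝ F] [CompleteSpace F]
    (g ginv : ℝ → F →L[ℝ] F) (hgc : Continuous g)
    (hinv : ∀ s, g s ∘L ginv s = 1 ∧ ginv s ∘L g s = 1) : Continuous ginv := by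
  have hunit : ∀ u : ℝ, ginv u = Ring.inverse (g u) := by
    intro u
    let U : (F →L[ℝ] F)ˣ := ⟨g u, ginv u, (hinv u).1, (hinv u).2⟩
    have h := Ring.inverse_unit U
    exact h.symm
  rw [continuous_iff_continuousAt]
  intro u
  have : ginv = fun u => Ring.inverse (g u) := funext hunit
  rw [this]
  have h1 : ContinuousAt (Ring.inverse : (F →L[ℝ] F) → (F →L[ℝ] F)) (g u) :=
    NormedRing.inverse_continuousAt (⟨g u, ginv u, (hinv u).1, (hinv u).2⟩ : (F →L[ℝ] F)ˣ)
  exact h1.comp hgc.continuousAt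

theorem coe_add_nat_circle (a : ℝ) (n : ℕ) :
    ((a + n : ℝ) : UnitAddCircle) = (a : UnitAddCircle) := by
  induction n with
  | zero => norm_num
  | succ m ih =>
    have h : (a + ((m + 1 : ℕ)) : ℝ) = (a + m) + 1 := by push_cast; ring
    rw [h, AddCircle.coe_add_period, ih]

theorem dist_coe_circle (x y : ℝ) :
    dist ((x : ℝ) : UnitAddCircle) ((y : ℝ) : UnitAddCircle) = |x - y - round (x - y)| := by
  rw [dist_eq_norm]
  have h : ((x : ℝ) : UnitAddCircle) - ((y : ℝ) : UnitAddCircle)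
      = ((x - y : ℝ) : UnitAddCircle) := by norm_cast
  rw [h, UnitAddCircle.norm_eq]

theorem coe_equivIco_circle (a : ℝ) (q : UnitAddCircle) :
    (((AddCircle.equivIco 1 a q : Ico a (a + 1)) : ℝ) : UnitAddCircle) = q :=
  (AddCircle.equivIco 1 a).symm_apply_apply q

/-- An `(ε, S)`-chain from `x` to `y` for `σ`, with respect to the distance function `d`. -/
def IsChainFrom {U T : Type*} (d : U → U → ℝ) (σ : T → U → U) (S : Set T)
    (ε : U → ℝ) (x y : U) : Prop :=
  ∃ k : ℕ, ∃ ts : Fin (k + 1) → T, ∃ xs : Fin (k + 2) → U,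
    xs 0 = x ∧ xs (Fin.last (k + 1)) = y ∧ (∀ i, ts i ∈ S) ∧
    ∀ i : Fin (k + 1),
      d (xs i.succ) (σ (ts i) (xs i.castSucc)) < ε (σ (ts i) (xs i.castSucc))

set_option maxHeartbeats 1600000 in
/-- The chain recurrent set of the skew-product flow `φᵗ` equals `S¹ ×_g R_c(g)`,
where `R_c(g)` is the chain recurrent set of the discrete-time flow generated by `g = g 1`. -/
theorem chain_recurrent_set_skew_product
    {F : Type*} [NormedAddCommGroup F] [NormedSpace ℝ F] [CompleteSpace F]
    (X g ginv : ℝ → F →L[ℝ] F)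
    (hX : Continuous X) (hXper : ∀ t, X (t + 1) = X t)
    (hg0 : g 0 = 1) (hg : ∀ t, HasDerivAt g (X t ∘L g t) t)
    (hinv : ∀ s, g s ∘L ginv s = 1 ∧ ginv s ∘L g s = 1)
    (φ : ℝ → UnitAddCircle × F → UnitAddCircle × F)
    (hφ : ∀ (t s : ℝ) (x : F),
      φ t ((s : UnitAddCircle), x) = (((s + t : ℝ) : UnitAddCircle), g (t + s) (ginv s x))) :
    {p : UnitAddCircle × F | ∀ ε : UnitAddCircle × F → ℝ, Continuous ε → (∀ u, 0 < ε u) →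
        ∀ t : ℝ, 0 < t →
          IsChainFrom (fun p q => dist p.1 q.1 + ‖p.2 - q.2‖) φ {r : ℝ | t < r} ε p p} =
      ⋃ s : ℝ, (fun y => ((s : UnitAddCircle), y)) ''
        (g s '' {x : F | ∀ ε : F → ℝ, Continuous ε → (∀ u, 0 < ε u) → ∀ t : ℝ, 0 < t →
          IsChainFrom (fun x y => ‖x - y‖) (fun (n : ℕ) (x : F) => (g 1 ^ n) x)
            {n : ℕ | t < (n : ℝ)} ε x x}) := by
  classical
  have hgc : Continuous g := by
    rw [continuous_iff_continuousAt]; exact fun t => (hg t).continuousAt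
  have hginvc : Continuous ginv := ginv_continuous g ginv hgc hinv
  have gcoc : ∀ (u : ℝ) (n : ℕ), g (u + n) = g u ∘L (g 1)^n :=
    g_cocycle_nat X g hX hXper hg0 hg
  have hginvg : ∀ (u : ℝ) (x : F), ginv u (g u x) = x := by
    intro u x
    have h := congrArg (fun (A : F →L[ℝ] F) => A x) (hinv u).2
    simpa using h
  have hgginv : ∀ (u : ℝ) (x : F), g u (ginv u x) = x := by
    intro u x
    have h := congrArg (fun (A : F →L[ℝ] F) => A x) (hinv u).1
    simpa using h
  ext p
  simp only [mem_setOf_eq, mem_iUnion, mem_image]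
  constructor
  · -- hard direction
    intro hp
    set s : ℝ := ((AddCircle.equivIco 1 0 p.1 : Ico (0:ℝ) (0+1)) : ℝ) with hs_def
    have hs : ((s : ℝ) : UnitAddCircle) = p.1 := coe_equivIco_circle 0 p.1
    set z : F := ginv s p.2 with hz_def
    refine ⟨s, g s z, ⟨z, ?_, rfl⟩, ?_⟩
    swap
    · have hzz : g s z = p.2 := hgginv s p.2
      rw [hzz]
      exact Prod.ext hs rfl
    -- z is chain recurrent for the discrete system
    intro ε' hε'c hε'p t ht
    set box : Set ℝ := Icc (s-3) (s+3) with hbox_def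
    obtain ⟨Mg, hMg⟩ := (isCompact_Icc (a := s - 3) (b := s + 3)).exists_bound_of_continuousOn
      hgc.continuousOn
    obtain ⟨Mi, hMi⟩ := (isCompact_Icc (a := s - 3) (b := s + 3)).exists_bound_of_continuousOn
      hginvc.continuousOn
    set M : ℝ := max (max Mg Mi) 1 with hM_def
    have hM1 : (1:ℝ) ≤ M := le_max_right _ _
    have hM0 : (0:ℝ) < M := lt_of_lt_of_le one_pos hM1
    have hMgle : ∀ u ∈ box, ‖g u‖ ≤ M := fun u hu =>
      (hMg u hu).trans ((le_max_left Mg Mi).trans (le_max_left _ _))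
    have hMile : ∀ u ∈ box, ‖ginv u‖ ≤ M := fun u hu =>
      (hMi u hu).trans ((le_max_right Mg Mi).trans (le_max_left _ _))
    set K : Set ℝ := Icc (s-2) (s+2) with hK_def
    have hKc : IsCompact K := isCompact_Icc
    have hKne : K.Nonempty := nonempty_Icc.2 (by linarith)
    have hKbox : K ⊆ box := Icc_subset_Icc (by linarith) (by linarith)
    set c : F → ℝ := fun w => sInf ((fun u => ε' (ginv u w)) '' K) with hc_def
    have hcont_in : ∀ w : F, Continuous (fun u : ℝ => ε' (ginv u w)) := fun w =>
      hε'c.comp (hginvc.clm_apply continuous_const)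
    have himgc : ∀ w, IsCompact ((fun u => ε' (ginv u w)) '' K) := fun w =>
      hKc.image_of_continuousOn (hcont_in w).continuousOn
    have himgne : ∀ w, ((fun u => ε' (ginv u w)) '' K).Nonempty := fun w => hKne.image _
    have hcpos : ∀ w, 0 < c w := by
      intro w
      obtain ⟨u, hu, heq⟩ := (himgc w).sInf_mem (himgne w)
      rw [hc_def]
      dsimp only
      rw [← heq]
      exact hε'p _
    have hcle : ∀ w u, u ∈ K → c w ≤ ε' (ginv u w) := fun w u hu =>
      csInf_le (himgc w).bddBelow (mem_image_of_mem _ hu)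
    have hUC := (isCompact_Icc (a := s-3) (b := s+3)).uniformContinuousOn_of_continuous
      hgc.continuousOn
    rw [Metric.uniformContinuousOn_iff] at hUC
    set V : UnitAddCircle × F → Set ℝ := fun P => {δ : ℝ | δ ∈ Icc (0:ℝ) 8⁻¹ ∧
      ∀ u ∈ box, ∀ τ ∈ box, |τ - u| ≤ 2*δ →
        M*δ + M^2*‖P.2‖*‖g τ - g u‖ ≤ c P.2 / 2} with hV_def
    have h0V : ∀ P, (0:ℝ) ∈ V P := by
      intro P
      refine ⟨⟨le_refl 0, by norm_num⟩, ?_⟩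
      intro u hu τ hτ habs
      have hτu : τ = u := by
        have h1 : |τ - u| ≤ 0 := by linarith
        have h2 := abs_nonneg (τ - u)
        have h3 : |τ - u| = 0 := le_antisymm h1 h2
        have h4 := abs_eq_zero.mp h3
        linarith
      rw [hτu, sub_self, norm_zero]
      have := hcpos P.2
      nlinarith
    have hVbdd : ∀ P, BddAbove (V P) := fun P => ⟨8⁻¹, fun δ hδ => hδ.1.2⟩
    set f : UnitAddCircle × F → ℝ := fun P => sSup (V P) with hf_def
    have hmem_of_lt : ∀ P δ', 0 ≤ δ' → δ' < f P → δ' ∈ V P := by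
      intro P δ' h0 hlt
      obtain ⟨δ, hδV, hlt'⟩ := exists_lt_of_lt_csSup ⟨0, h0V P⟩ hlt
      refine ⟨⟨h0, le_trans hlt'.le hδV.1.2⟩, ?_⟩
      intro u hu τ hτ habs
      have h1 := hδV.2 u hu τ hτ (by nlinarith)
      nlinarith [norm_nonneg (g τ - g u), norm_nonneg P.2]
    have hl : ∀ P : UnitAddCircle × F, ∃ r > (0:ℝ), ∃ b > (0:ℝ),
        ∀ Q, dist P Q < r → b ≤ f Q := by
      intro P
      set B : ℝ := 3/4 * c P.2 with hB
      have hB0 : 0 < B := by have := hcpos P.2; rw [hB]; linarith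
      have hev : ∀ᶠ w' in nhds P.2, ∀ u ∈ K, B ≤ ε' (ginv u w') := by
        apply hKc.eventually_forall_of_forall_eventually
        intro u hu
        have hcont : Continuous (fun zz : F × ℝ => ε' (ginv zz.2 zz.1)) :=
          hε'c.comp ((hginvc.comp continuous_snd).clm_apply continuous_fst)
        have hopen : IsOpen {zz : F × ℝ | B < ε' (ginv zz.2 zz.1)} :=
          isOpen_lt continuous_const hcont
        have hmem : (P.2, u) ∈ {zz : F × ℝ | B < ε' (ginv zz.2 zz.1)} := by
          have h1 : B < c P.2 := by have := hcpos P.2; rw [hB]; linarith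
          exact lt_of_lt_of_le h1 (hcle P.2 u hu)
        exact Filter.Eventually.mono (hopen.mem_nhds hmem) (fun zz hz => hz.le)
      rw [Metric.eventually_nhds_iff] at hev
      obtain ⟨r₁, hr₁, hev⟩ := hev
      set η : ℝ := B / (4 * (M^2 * (‖P.2‖ + 1) + 1)) with hη
      have hη0 : 0 < η := by
        rw [hη]
        have h2 : (0:ℝ) < M^2 * (‖P.2‖ + 1) + 1 := by positivity
        positivity
      obtain ⟨δ₁, hδ₁0, hδ₁⟩ := hUC η hη0
      set δ₂ : ℝ := min (min (δ₁/4) 8⁻¹) (B/(4*M)) with hδ₂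
      have hδ₂0 : 0 < δ₂ := by
        refine lt_min (lt_min (by linarith) (by norm_num)) (by positivity)
      refine ⟨min r₁ 1, lt_min hr₁ one_pos, δ₂, hδ₂0, ?_⟩
      intro Q hQ
      have hQ2 : dist P.2 Q.2 < min r₁ 1 :=
        lt_of_le_of_lt (le_trans (le_max_right _ _) (le_of_eq Prod.dist_eq.symm)) hQ
      have hcQ : B ≤ c Q.2 := by
        refine le_csInf (himgne Q.2) ?_
        rintro _ ⟨u, hu, rfl⟩
        exact hev (by rw [dist_comm]; exact lt_of_lt_of_le hQ2 (min_le_left _ _)) u hu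
      have hnQ : ‖Q.2‖ ≤ ‖P.2‖ + 1 := by
        have h1 : ‖Q.2‖ - ‖P.2‖ ≤ ‖Q.2 - P.2‖ := norm_sub_norm_le _ _
        have h2 : ‖Q.2 - P.2‖ = dist Q.2 P.2 := (dist_eq_norm _ _).symm
        have h3 : dist Q.2 P.2 < 1 := by
          rw [dist_comm]; exact lt_of_lt_of_le hQ2 (min_le_right _ _)
        linarith
      refine le_csSup (hVbdd Q) ⟨⟨hδ₂0.le, le_trans (le_trans (min_le_left _ _)
        (min_le_right _ _)) le_rfl⟩, ?_⟩
      intro u hu τ hτ habs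
      have habs' : dist τ u < δ₁ := by
        rw [Real.dist_eq]
        have h4 : δ₂ ≤ δ₁/4 := le_trans (min_le_left _ _) (min_le_left _ _)
        linarith
      have hglt : ‖g τ - g u‖ ≤ η := by
        have := hδ₁ τ hτ u hu habs'
        rw [dist_eq_norm] at this
        exact this.le
      have h5 : M*δ₂ ≤ B/4 := by
        have h6 : δ₂ ≤ B/(4*M) := min_le_right _ _
        calc M*δ₂ ≤ M*(B/(4*M)) := mul_le_mul_of_nonneg_left h6 hM0.le
          _ = B/4 := by
            have := hM0.ne'
            field_simp
      have h7 : M^2*‖Q.2‖*‖g τ - g u‖ ≤ B/4 := by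
        have h8 : M^2*‖Q.2‖ ≤ M^2 * (‖P.2‖+1) := by nlinarith [sq_nonneg M]
        have h9 : (0:ℝ) ≤ M^2*‖Q.2‖ := by positivity
        have h10 : M^2*‖Q.2‖*‖g τ - g u‖ ≤ (M^2 * (‖P.2‖+1)) * η := by
          apply mul_le_mul h8 hglt (norm_nonneg _) (by positivity)
        have h11 : (M^2 * (‖P.2‖+1)) * η ≤ B/4 := by
          have hD0 : (0:ℝ) ≤ M^2 * (‖P.2‖+1) := by positivity
          have hD1 : (0:ℝ) < M^2 * (‖P.2‖+1) + 1 := by linarith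
          rw [hη]
          rw [show (M^2 * (‖P.2‖+1)) * (B / (4 * (M^2 * (‖P.2‖+1) + 1)))
            = (B/4) * ((M^2 * (‖P.2‖+1)) / ((M^2 * (‖P.2‖+1)) + 1)) from by field_simp]
          have h14 : (M^2 * (‖P.2‖+1)) / ((M^2 * (‖P.2‖+1)) + 1) ≤ 1 :=
            (div_le_one hD1).mpr (by linarith)
          nlinarith [hB0]
        linarith
      linarith
    obtain ⟨e, hec, hep, hef⟩ := exists_continuous_pos_le f hl
    obtain ⟨k, Ts, qs, hq0, hql, hTs, hstep⟩ :=
      hp (fun P => e P / 2) (hec.div_const 2) (fun u => half_pos (hep u)) (t + 3)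
        (by linarith)
    set ρ : Fin (k+2) → ℝ := fun i =>
      if i = 0 ∨ i = Fin.last (k+1) then s
      else ((AddCircle.equivIco 1 (s - 2⁻¹) ((qs i).1) : Ico (s - 2⁻¹) (s - 2⁻¹ + 1)) : ℝ)
      with hρ_def
    have hρcoe : ∀ i, ((ρ i : ℝ) : UnitAddCircle) = (qs i).1 := by
      intro i
      by_cases h : i = 0 ∨ i = Fin.last (k+1)
      · rw [hρ_def]; simp only [if_pos h]
        rcases h with h | h
        · rw [h, hq0]; exact hs
        · rw [h, hql]; exact hs
      · rw [hρ_def]; simp only [if_neg h]; exact coe_equivIco_circle _ _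
    have hρmem : ∀ i, ρ i ∈ Icc (s - 2⁻¹) (s + 2⁻¹) := by
      intro i
      by_cases h : i = 0 ∨ i = Fin.last (k+1)
      · rw [hρ_def]; simp only [if_pos h]
        constructor <;> [linarith [(by norm_num : (0:ℝ) < 2⁻¹)];
          linarith [(by norm_num : (0:ℝ) < 2⁻¹)]]
      · rw [hρ_def]; simp only [if_neg h]
        have hmem := (AddCircle.equivIco 1 (s - 2⁻¹) ((qs i).1)).2
        constructor
        · exact hmem.1
        · have := hmem.2; linarith
    have hρ0 : ρ 0 = s := by rw [hρ_def]; simp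
    have hρl : ρ (Fin.last (k+1)) = s := by rw [hρ_def]; simp
    set xx : Fin (k+2) → F := fun i => ginv (ρ i) ((qs i).2) with hxx
    have hx0 : xx 0 = z := by rw [hxx]; dsimp only; rw [hρ0, hq0, hz_def]
    have hxl : xx (Fin.last (k+1)) = z := by rw [hxx]; dsimp only; rw [hρl, hql, hz_def]
    have hkeystep : ∀ i : Fin (k+1), ∃ n : ℕ, t < (n:ℝ) ∧
        ‖xx i.succ - ((g 1)^n) (xx i.castSucc)‖ < ε' (((g 1)^n) (xx i.castSucc)) := by
      intro i
      set ρi : ℝ := ρ i.castSucc with hρi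
      set ρ' : ℝ := ρ i.succ with hρ'
      set T : ℝ := Ts i with hT
      have hTgt : t + 3 < T := hTs i
      have hqeq : qs i.castSucc = (((ρi : ℝ) : UnitAddCircle), (qs i.castSucc).2) :=
        Prod.ext (hρcoe i.castSucc).symm rfl
      have hφP : φ T (qs i.castSucc)
          = (((ρi + T : ℝ) : UnitAddCircle), g (T + ρi) (xx i.castSucc)) := by
        conv_lhs => rw [hqeq]
        rw [hφ T ρi ((qs i.castSucc).2)]
      set w : F := g (T + ρi) (xx i.castSucc) with hw_def
      have hchain := hstep i
      rw [hφP] at hchain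
      set P : UnitAddCircle × F := (((ρi + T : ℝ) : UnitAddCircle), w) with hP_def
      set δu : ℝ := e P / 2 with hδu
      have hδu0 : 0 < δu := half_pos (hep P)
      have hδuV : δu ∈ V P := by
        refine hmem_of_lt P δu hδu0.le ?_
        have h1 := hep P
        have h2 := hef P
        rw [hδu]
        simp only [hf_def] at h2 ⊢
        linarith
      have hδu8 : δu ≤ 8⁻¹ := hδuV.1.2
      have hdist1 : dist (qs i.succ).1 P.1 < δu := by
        have h1 := norm_nonneg ((qs i.succ).2 - w)
        exact lt_of_le_of_lt (le_add_of_nonneg_right h1) hchain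
      have hy : ‖(qs i.succ).2 - w‖ < δu := by
        have h1 := dist_nonneg (x := (qs i.succ).1) (y := P.1)
        calc ‖(qs i.succ).2 - w‖ ≤ dist (qs i.succ).1 P.1 + ‖(qs i.succ).2 - w‖ := by linarith
          _ < δu := hchain
      set a : ℝ := ρ' - (ρi + T) with ha
      set m : ℤ := round a with hm
      have hdist2 : dist (qs i.succ).1 P.1 = |a - m| := by
        rw [← hρcoe i.succ]
        rw [hP_def]
        exact dist_coe_circle ρ' (ρi + T)
      have hd : |a - m| < δu := hdist2 ▸ hdist1
      set u : ℝ := ρ' - (a - m) with hu_def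
      have hρ'mem := hρmem i.succ
      have hρimem := hρmem i.castSucc
      have hdlt : |a - m| < 8⁻¹ := lt_of_lt_of_le hd hδu8
      have habs_am := abs_lt.mp hdlt
      have humem : u ∈ Icc (s-1) (s+1) := by
        constructor
        · rw [hu_def]
          have := hρ'mem.1
          simp only [hρ'] at this ⊢
          norm_num at this ⊢
          linarith [habs_am.1, habs_am.2]
        · rw [hu_def]
          have := hρ'mem.2
          norm_num at this ⊢
          linarith [habs_am.1, habs_am.2]
      have humemK : u ∈ K := Icc_subset_Icc (by linarith) (by linarith) humem
      have humembox : u ∈ box := hKbox humemK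
      have hρ'box : ρ' ∈ box := by
        have h1 := hρ'mem.1; have h2 := hρ'mem.2
        constructor
        · norm_num at h1 ⊢; linarith
        · norm_num at h2 ⊢; linarith
      have hρ'K : ρ' ∈ K := by
        have h1 := hρ'mem.1; have h2 := hρ'mem.2
        constructor
        · norm_num at h1 ⊢; linarith
        · norm_num at h2 ⊢; linarith
      have hmu : (m:ℝ) = u - (ρi + T) := by rw [hu_def, ha]; ring
      have hnmpos : (0:ℝ) < -(m:ℝ) := by
        rw [hmu]
        have h1 := hρimem.1
        have h2 := humem.2
        norm_num at h1
        linarith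
      set n : ℕ := (-m).toNat with hn
      have hncast : (n:ℝ) = -(m:ℝ) := by
        have h1 : (0:ℤ) ≤ -m := by exact_mod_cast hnmpos.le
        have h2 : ((-m).toNat : ℤ) = -m := Int.toNat_of_nonneg h1
        rw [hn]
        exact_mod_cast congrArg (fun x : ℤ => (x : ℝ)) h2
      have hnt : t < (n:ℝ) := by
        rw [hncast, hmu]
        have h1 := hρimem.1
        have h2 := humem.2
        norm_num at h1
        linarith
      have hTρ : T + ρi = u + (n:ℝ) := by
        rw [hncast, hmu]; ring
      have hwu : w = g u (((g 1)^n) (xx i.castSucc)) := by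
        rw [hw_def, hTρ, gcoc u n]; rfl
      set v : F := ((g 1)^n) (xx i.castSucc) with hv_def2
      have hvinv : v = ginv u w := by rw [hwu, hginvg]
      have hnormv : ‖v‖ ≤ M * ‖w‖ := by
        rw [hvinv]
        exact le_trans ((ginv u).le_opNorm w)
          (mul_le_mul_of_nonneg_right (hMile u humembox) (norm_nonneg _))
      have hxsucc : xx i.succ = ginv ρ' ((qs i.succ).2) := rfl
      have hsplit : xx i.succ - v
          = ginv ρ' ((qs i.succ).2 - w) + ginv ρ' ((g u - g ρ') v) := by
        rw [hxsucc]
        have h1 : ginv ρ' (g ρ' v) = v := hginvg ρ' v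
        have h2 : (g u - g ρ') v = g u v - g ρ' v := ContinuousLinearMap.sub_apply _ _ _
        rw [h2]
        rw [← map_add]
        have h3 : (qs i.succ).2 - w + (g u v - g ρ' v) = (qs i.succ).2 - g ρ' v := by
          rw [← hwu]; abel
        rw [h3, map_sub, h1]
      have hnorm1 : ‖ginv ρ' ((qs i.succ).2 - w)‖ < M * δu := by
        calc ‖ginv ρ' ((qs i.succ).2 - w)‖ ≤ ‖ginv ρ'‖ * ‖(qs i.succ).2 - w‖ :=
              (ginv ρ').le_opNorm _
          _ ≤ M * ‖(qs i.succ).2 - w‖ :=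
              mul_le_mul_of_nonneg_right (hMile ρ' hρ'box) (norm_nonneg _)
          _ < M * δu := by exact mul_lt_mul_of_pos_left hy hM0
      have habs_ru : |ρ' - u| ≤ 2 * δu := by
        have h1 : ρ' - u = a - m := by rw [hu_def]; ring
        rw [h1]
        linarith [hd.le]
      have hcond := hδuV.2 u humembox ρ' hρ'box habs_ru
      -- hcond : M*δu + M^2*‖P.2‖*‖g ρ' - g u‖ ≤ c P.2 / 2,  P.2 = w
      have hnorm2 : ‖ginv ρ' ((g u - g ρ') v)‖ ≤ M^2 * ‖w‖ * ‖g ρ' - g u‖ := by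
        calc ‖ginv ρ' ((g u - g ρ') v)‖ ≤ ‖ginv ρ'‖ * ‖(g u - g ρ') v‖ :=
              (ginv ρ').le_opNorm _
          _ ≤ M * ‖(g u - g ρ') v‖ :=
              mul_le_mul_of_nonneg_right (hMile ρ' hρ'box) (norm_nonneg _)
          _ ≤ M * (‖g u - g ρ'‖ * ‖v‖) :=
              mul_le_mul_of_nonneg_left ((g u - g ρ').le_opNorm v) hM0.le
          _ ≤ M * (‖g u - g ρ'‖ * (M * ‖w‖)) := by
              have := mul_le_mul_of_nonneg_left hnormv (norm_nonneg (g u - g ρ'))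
              nlinarith [norm_nonneg (g u - g ρ'), hM0.le]
          _ = M^2 * ‖w‖ * ‖g ρ' - g u‖ := by rw [norm_sub_rev]; ring
      have hfinal : ‖xx i.succ - v‖ < ε' v := by
        have h1 : ‖xx i.succ - v‖ ≤ ‖ginv ρ' ((qs i.succ).2 - w)‖
            + ‖ginv ρ' ((g u - g ρ') v)‖ := by
          rw [hsplit]; exact norm_add_le _ _
        have h2 : (P.2 : F) = w := rfl
        rw [h2] at hcond
        have h3 := hcpos w
        have h4 : c w ≤ ε' (ginv u w) := hcle w u humemK
        have h5 : ε' (ginv u w) = ε' v := by rw [hvinv]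
        linarith
      exact ⟨n, hnt, hfinal⟩
    choose ns hns1 hns2 using hkeystep
    exact ⟨k, ns, xx, hx0, hxl, hns1, hns2⟩
  · -- easy direction
    rintro ⟨sR, y, ⟨z, hz, rfl⟩, rfl⟩
    intro ε hεc hεp t ht
    set M₀ : ℝ := ‖g sR‖ + 1 with hM₀
    have hM₀0 : 0 < M₀ := by rw [hM₀]; positivity
    obtain ⟨k, ns, xs, hx0, hxl, hns, hstep⟩ := hz
      (fun x => ε ((sR : UnitAddCircle), g sR x) / M₀)
      ((hεc.comp (continuous_const.prodMk (g sR).continuous)).div_const M₀)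
      (fun x => div_pos (hεp _) hM₀0) t ht
    refine ⟨k, fun i => (ns i : ℝ), fun i => ((sR : UnitAddCircle), g sR (xs i)),
      by dsimp only; rw [hx0], by dsimp only; rw [hxl], fun i => hns i, ?_⟩
    intro i
    dsimp only
    set v : F := ((g 1) ^ (ns i)) (xs i.castSucc) with hv_def
    have hφeq : φ (ns i) ((sR : UnitAddCircle), g sR (xs i.castSucc))
        = ((sR : UnitAddCircle), g sR v) := by
      rw [hφ]
      refine Prod.ext ?_ ?_
      · exact coe_add_nat_circle sR (ns i)
      · show g ((ns i : ℝ) + sR) (ginv sR (g sR (xs i.castSucc))) = g sR v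
        rw [hginvg, add_comm, gcoc]
        rfl
    rw [hφeq]
    rw [dist_self, zero_add, ← map_sub]
    have h1 : ‖g sR (xs i.succ - v)‖ ≤ ‖g sR‖ * ‖xs i.succ - v‖ := (g sR).le_opNorm _
    have h2 := hstep i
    have h3 : 0 < ε ((sR : UnitAddCircle), g sR v) := hεp _
    have h4 : ‖xs i.succ - v‖ < ε ((sR : UnitAddCircle), g sR v) / M₀ := h2
    have h5 : ‖g sR‖ * ‖xs i.succ - v‖ < M₀ * (ε ((sR : UnitAddCircle), g sR v) / M₀) := by
      calc ‖g sR‖ * ‖xs i.succ - v‖ ≤ M₀ * ‖xs i.succ - v‖ :=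
            mul_le_mul_of_nonneg_right (by rw [hM₀]; linarith) (norm_nonneg _)
        _ < M₀ * (ε ((sR : UnitAddCircle), g sR v) / M₀) := mul_lt_mul_of_pos_left h4 hM₀0
    have h6 : M₀ * (ε ((sR : UnitAddCircle), g sR v) / M₀) = ε ((sR : UnitAddCircle), g sR v) := by
      field_simp
    linarith
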